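/- Let P be a simple program and let π ∈ S_P be a minimally specific possibilistic model of P. Then either M = {l ∈ Lit_P : N(l) = 1} is the unique consistent answer set of P, or π is the vacuous possibility distribution, in which case P has no consistent answer set. -/

import Mathlib

open Classical

namespace PASP

/-- An interpretation assigns a truth value to each atom. -/
abbrev Interp (A : Type) := A → Bool

/-- A literal is an atom with a sign (`true` = positive, `false` = classical negation). -/
abbrev Lit (A : Type) := A × Bool

/-- A possibility distribution on interpretations. -/
abbrev PossDist (A : Type) := Interp A → ℝ

variable {A : Type}

def litSat (ω : Interp A) (l : Lit A) : Prop := ω l.1 = l.2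

def IsPossDist (π : PossDist A) : Prop := ∀ ω, 0 ≤ π ω ∧ π ω ≤ 1

noncomputable def poss (π : PossDist A) (p : Interp A → Prop) : ℝ :=
  sSup {x | ∃ ω, p ω ∧ π ω = x}

noncomputable def nec (π : PossDist A) (p : Interp A → Prop) : ℝ :=
  1 - poss π fun ω => ¬ p ω

noncomputable def necLit (π : PossDist A) (l : Lit A) : ℝ :=
  nec π fun ω => litSat ω l

def Consistent (M : Set (Lit A)) : Prop :=
  ∀ a : A, ¬ ((a, true) ∈ M ∧ (a, false) ∈ M)

/-- A simple rule `l₀ ← l₁,…,l_m`; a head `none` stands for `⊥` (constraint rule). -/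
structure SimpleRule (A : Type) where
  head : Option (Lit A)
  body : Finset (Lit A)

/-- A consistent set of literals `I` is a model of a simple rule if the head is in `I`
whenever the body is contained in `I` (for a constraint rule the body must not be
contained in `I`). -/
def ruleModel (I : Set (Lit A)) (r : SimpleRule A) : Prop :=
  (↑r.body : Set (Lit A)) ⊆ I → ∃ l, r.head = some l ∧ l ∈ I

/-- Models of a simple program: the consistent sets of literals that are models of all
rules, together with the set of all literals itself. -/
def IsModel (P : Set (SimpleRule A)) (I : Set (Lit A)) : Prop :=
  (Consistent I ∧ ∀ r ∈ P, ruleModel I r) ∨ I = Set.univ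

/-- An answer set of a simple program is a minimal model with respect to set inclusion. -/
def IsAnswerSet (P : Set (SimpleRule A)) (I : Set (Lit A)) : Prop :=
  IsModel P I ∧ ∀ J, IsModel P J → J ⊆ I → J = I

/-- Necessity of the head of a simple rule (`N(⊥) = 1 - Π(⊤)` for constraint rules). -/
noncomputable def headNec (π : PossDist A) : Option (Lit A) → ℝ
  | some l => necLit π l
  | none => nec π fun _ => False

/-- `min(N(l₁),…,N(l_m))`, where the minimum of the empty list is 1. -/
noncomputable def minBody (π : PossDist A) (B : Finset (Lit A)) : ℝ :=
  sInf (insert 1 (necLit π '' (↑B : Set (Lit A))))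

/-- The constraint `N(l₀) ≥ min(N(l₁),…,N(l_m))` imposed by a simple rule. -/
def simpleConstraint (π : PossDist A) (r : SimpleRule A) : Prop :=
  minBody π r.body ≤ headNec π r.head

/-- The possibilistic models of a simple program. -/
def possModels (P : Set (SimpleRule A)) : Set (PossDist A) :=
  {π | IsPossDist π ∧ ∀ r ∈ P, simpleConstraint π r}

/-- `π` is a minimally specific element of `S`: it belongs to `S` and no pointwise
greater element of `S` differs from it. -/
def MinSpecific (S : Set (PossDist A)) (π : PossDist A) : Prop :=
  π ∈ S ∧ ∀ π' ∈ S, π ≤ π' → π' = π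


section Aux

variable {A : Type}

lemma bddAbove_possSet {π : PossDist A} (hπ : IsPossDist π) (f : Interp A → Prop) :
    BddAbove {x | ∃ ω, f ω ∧ π ω = x} :=
  ⟨1, by rintro x ⟨ω, _, rfl⟩; exact (hπ ω).2⟩

lemma poss_le_one {π : PossDist A} (hπ : IsPossDist π) (f : Interp A → Prop) :
    poss π f ≤ 1 :=
  Real.sSup_le (by rintro x ⟨ω, _, rfl⟩; exact (hπ ω).2) zero_le_one

lemma poss_nonneg {π : PossDist A} (hπ : IsPossDist π) (f : Interp A → Prop) :
    0 ≤ poss π f :=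
  Real.sSup_nonneg (by rintro x ⟨ω, _, rfl⟩; exact (hπ ω).1)

lemma le_poss {π : PossDist A} (hπ : IsPossDist π) {f : Interp A → Prop} {ω : Interp A}
    (h : f ω) : π ω ≤ poss π f :=
  le_csSup (bddAbove_possSet hπ f) ⟨ω, h, rfl⟩

lemma necLit_nonneg {π : PossDist A} (hπ : IsPossDist π) (l : Lit A) : 0 ≤ necLit π l := by
  have := poss_le_one hπ (fun ω => ¬ litSat ω l)
  unfold necLit nec; linarith

lemma necLit_le_one {π : PossDist A} (hπ : IsPossDist π) (l : Lit A) : necLit π l ≤ 1 := by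
  have := poss_nonneg hπ (fun ω => ¬ litSat ω l)
  unfold necLit nec; linarith

lemma pi_eq_zero_of_necLit_one {π : PossDist A} (hπ : IsPossDist π) {l : Lit A}
    (h : necLit π l = 1) {ω : Interp A} (hω : ¬ litSat ω l) : π ω = 0 := by
  have h0 : poss π (fun ω => ¬ litSat ω l) = 0 := by
    unfold necLit nec at h; linarith
  have h1 : π ω ≤ poss π (fun ω => ¬ litSat ω l) := le_poss hπ hω
  have h2 := (hπ ω).1
  linarith

lemma bddBelow_minSet {π : PossDist A} (hπ : IsPossDist π) (B : Finset (Lit A)) :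
    BddBelow (insert (1:ℝ) (necLit π '' (↑B : Set (Lit A)))) := by
  refine ⟨0, ?_⟩
  rintro x (rfl | ⟨l, _, rfl⟩)
  · exact zero_le_one
  · exact necLit_nonneg hπ l

lemma minBody_le_one {π : PossDist A} (hπ : IsPossDist π) (B : Finset (Lit A)) :
    minBody π B ≤ 1 :=
  csInf_le (bddBelow_minSet hπ B) (Set.mem_insert _ _)

lemma minBody_le {π : PossDist A} (hπ : IsPossDist π) {B : Finset (Lit A)} {l : Lit A}
    (h : l ∈ B) : minBody π B ≤ necLit π l :=
  csInf_le (bddBelow_minSet hπ B) (Set.mem_insert_of_mem _ ⟨l, h, rfl⟩)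

lemma minBody_eq_one {π : PossDist A} {B : Finset (Lit A)}
    (h : ∀ l ∈ B, necLit π l = 1) : minBody π B = 1 := by
  have : insert (1:ℝ) (necLit π '' (↑B : Set (Lit A))) = {1} := by
    apply Set.Subset.antisymm
    · rintro x (rfl | ⟨l, hl, rfl⟩)
      · rfl
      · exact h l hl
    · rintro x rfl; exact Set.mem_insert _ _
  rw [minBody, this, csInf_singleton]

lemma headNec_nonneg {π : PossDist A} (hπ : IsPossDist π) (h : Option (Lit A)) :
    0 ≤ headNec π h := by
  cases h with
  | none =>
      have := poss_le_one hπ (fun ω => ¬ False)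
      simp only [headNec, nec]; linarith
  | some l => exact necLit_nonneg hπ l

/-- Closedness of a set of literals under the positive part of the rules. -/
def Closed (P : Set (SimpleRule A)) (I : Set (Lit A)) : Prop :=
  ∀ r ∈ P, ∀ l, r.head = some l → (↑r.body : Set (Lit A)) ⊆ I → l ∈ I

/-- The least closed set of literals. -/
def cl (P : Set (SimpleRule A)) : Set (Lit A) := ⋂₀ {I | Closed P I}

lemma cl_least {P : Set (SimpleRule A)} {I : Set (Lit A)} (h : Closed P I) : cl P ⊆ I :=
  Set.sInter_subset_of_mem h

lemma cl_closed (P : Set (SimpleRule A)) : Closed P (cl P) := by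
  intro r hr l hl hb
  intro I hI
  exact hI r hr l hl (fun x hx => hb hx I hI)

lemma cl_subset_necOne {P : Set (SimpleRule A)} {π : PossDist A} (hπ : π ∈ possModels P) :
    cl P ⊆ {l : Lit A | necLit π l = 1} := by
  apply cl_least
  intro r hr l hl hb
  have hc := hπ.2 r hr
  rw [simpleConstraint, hl] at hc
  have h1 : minBody π r.body = 1 := minBody_eq_one (fun l' hl' => hb (Finset.mem_coe.2 hl'))
  have h2 : necLit π l ≤ 1 := necLit_le_one hπ.1 l
  simp only [headNec] at hc
  have : (1:ℝ) ≤ necLit π l := h1 ▸ hc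
  exact le_antisymm h2 this

lemma cl_subset_model {P : Set (SimpleRule A)} {I : Set (Lit A)}
    (h : ∀ r ∈ P, ruleModel I r) : cl P ⊆ I := by
  apply cl_least
  intro r hr l hl hb
  obtain ⟨l', hl', hmem⟩ := h r hr hb
  rw [hl] at hl'
  cases hl'
  exact hmem

lemma poss_max {p q : PossDist A} (hp : IsPossDist p) (hq : IsPossDist q)
    (f : Interp A → Prop) :
    poss (fun ω => max (p ω) (q ω)) f = max (poss p f) (poss q f) := by
  have hm : IsPossDist (fun ω => max (p ω) (q ω)) := fun ω =>
    ⟨le_max_of_le_left (hp ω).1, max_le (hp ω).2 (hq ω).2⟩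
  apply le_antisymm
  · apply Real.sSup_le
    · rintro x ⟨ω, hω, rfl⟩
      exact max_le_max (le_poss hp hω) (le_poss hq hω)
    · exact le_max_of_le_left (poss_nonneg hp f)
  · apply max_le <;>
      apply Real.sSup_le (fun x hx => ?_) (poss_nonneg hm f)
    · obtain ⟨ω, hω, rfl⟩ := hx
      exact le_trans (le_max_left _ _) (le_poss hm hω)
    · obtain ⟨ω, hω, rfl⟩ := hx
      exact le_trans (le_max_right _ _) (le_poss hm hω)

lemma necLit_max {p q : PossDist A} (hp : IsPossDist p) (hq : IsPossDist q) (l : Lit A) :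
    necLit (fun ω => max (p ω) (q ω)) l = min (necLit p l) (necLit q l) := by
  unfold necLit nec
  rw [poss_max hp hq, min_sub_sub_left]

lemma max_mem_possModels {P : Set (SimpleRule A)} {p q : PossDist A}
    (hp : p ∈ possModels P) (hq : q ∈ possModels P) :
    (fun ω => max (p ω) (q ω)) ∈ possModels P := by
  have hm : IsPossDist (fun ω => max (p ω) (q ω)) := fun ω =>
    ⟨le_max_of_le_left ((hp.1) ω).1, max_le ((hp.1) ω).2 ((hq.1) ω).2⟩
  refine ⟨hm, fun r hr => ?_⟩
  rw [simpleConstraint]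
  have hhead : headNec (fun ω => max (p ω) (q ω)) r.head
      = min (headNec p r.head) (headNec q r.head) := by
    cases r.head with
    | none =>
        simp only [headNec, nec]
        rw [poss_max hp.1 hq.1, min_sub_sub_left]
    | some l => exact necLit_max hp.1 hq.1 l
  have hminp : minBody (fun ω => max (p ω) (q ω)) r.body ≤ minBody p r.body := by
    apply le_csInf ⟨1, Set.mem_insert _ _⟩
    rintro b (rfl | ⟨l, hl, rfl⟩)
    · exact minBody_le_one hm r.body
    · calc minBody (fun ω => max (p ω) (q ω)) r.body
          ≤ necLit (fun ω => max (p ω) (q ω)) l := minBody_le hm (Finset.mem_coe.1 hl)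
        _ = min (necLit p l) (necLit q l) := necLit_max hp.1 hq.1 l
        _ ≤ necLit p l := min_le_left _ _
  have hminq : minBody (fun ω => max (p ω) (q ω)) r.body ≤ minBody q r.body := by
    apply le_csInf ⟨1, Set.mem_insert _ _⟩
    rintro b (rfl | ⟨l, hl, rfl⟩)
    · exact minBody_le_one hm r.body
    · calc minBody (fun ω => max (p ω) (q ω)) r.body
          ≤ necLit (fun ω => max (p ω) (q ω)) l := minBody_le hm (Finset.mem_coe.1 hl)
        _ = min (necLit p l) (necLit q l) := necLit_max hp.1 hq.1 l
        _ ≤ necLit q l := min_le_right _ _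
  rw [hhead]
  exact le_min (le_trans hminp (hp.2 r hr)) (le_trans hminq (hq.2 r hr))

/-- The indicator distribution of the models of a set of literals. -/
noncomputable def indL (L : Set (Lit A)) : PossDist A :=
  fun ω => if ∀ l ∈ L, litSat ω l then 1 else 0

lemma indL_isPossDist (L : Set (Lit A)) : IsPossDist (indL L) := by
  intro ω
  unfold indL
  split <;> norm_num

/-- A model of a consistent set `L` that falsifies a literal not in `L`. -/
lemma exists_model_falsifying {L : Set (Lit A)} (hL : Consistent L) {l : Lit A}
    (hl : l ∉ L) : ∃ ω : Interp A, (∀ l' ∈ L, litSat ω l') ∧ ¬ litSat ω l := by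
  classical
  obtain ⟨a, b⟩ := l
  refine ⟨fun a' => if a' = a then !b else (if (a', true) ∈ L then true else false), ?_, ?_⟩
  · rintro ⟨a', b'⟩ hl'
    show (if a' = a then !b else _) = b'
    by_cases ha : a' = a
    · subst ha
      simp only [if_pos rfl]
      cases b' with
      | false => cases b with
        | false => exact absurd hl' (by simpa using hl)
        | true => rfl
      | true => cases b with
        | false => rfl
        | true => exact absurd hl' (by simpa using hl)
    · rw [if_neg ha]
      cases b' with
      | true => rw [if_pos hl']
      | false =>
          rw [if_neg]
          intro hmem
          exact hL a' ⟨hmem, hl'⟩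
  · show ¬ ((if a = a then !b else _) = b)
    rw [if_pos rfl]
    exact Bool.not_ne_self b

lemma necLit_indL_of_mem {L : Set (Lit A)} {l : Lit A} (hl : l ∈ L) :
    necLit (indL L) l = 1 := by
  have h0 : poss (indL L) (fun ω => ¬ litSat ω l) = 0 := by
    apply le_antisymm
    · apply Real.sSup_le _ le_rfl
      rintro x ⟨ω, hω, rfl⟩
      unfold indL
      rw [if_neg]
      intro hall
      exact hω (hall l hl)
    · exact poss_nonneg (indL_isPossDist L) _
  unfold necLit nec
  rw [h0]; norm_num

lemma indL_mem_possModels {P : Set (SimpleRule A)} (hL : Consistent (cl P))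
    (hcon : ∀ r ∈ P, r.head = none → ¬ (↑r.body : Set (Lit A)) ⊆ cl P) :
    indL (cl P) ∈ possModels P := by
  have hpd := indL_isPossDist (cl P)
  refine ⟨hpd, fun r hr => ?_⟩
  rw [simpleConstraint]
  by_cases hb : (↑r.body : Set (Lit A)) ⊆ cl P
  · cases hh : r.head with
    | none => exact absurd hb (hcon r hr hh)
    | some l =>
        have hl : l ∈ cl P := cl_closed P r hr l hh hb
        simp only [headNec]
        rw [necLit_indL_of_mem hl]
        exact minBody_le_one hpd r.body
  · rw [Set.not_subset] at hb
    obtain ⟨l, hl, hnl⟩ := hb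
    obtain ⟨ω₀, hω₀, hωl⟩ := exists_model_falsifying hL hnl
    have hnec0 : necLit (indL (cl P)) l = 0 := by
      have h1 : poss (indL (cl P)) (fun ω => ¬ litSat ω l) = 1 := by
        apply le_antisymm (poss_le_one hpd _)
        have := le_poss hpd (f := fun ω => ¬ litSat ω l) (ω := ω₀) hωl
        unfold indL at this
        rwa [if_pos hω₀] at this
      unfold necLit nec
      rw [h1]; norm_num
    calc minBody (indL (cl P)) r.body ≤ necLit (indL (cl P)) l :=
          minBody_le hpd (Finset.mem_coe.1 hl)
      _ = 0 := hnec0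
      _ ≤ headNec (indL (cl P)) r.head := headNec_nonneg hpd r.head

end Aux

/-- if `π ∈ S_P` then either `M = {l : N(l) = 1}` is the unique consistent
answer set of `P`, or `π` is vacuous and `P` has no consistent answer set. -/
theorem stmt1 {A : Type} [Fintype A] (P : Set (SimpleRule A)) (π : PossDist A)
    (hπ : MinSpecific (possModels P) π) :
    (IsAnswerSet P {l : Lit A | necLit π l = 1} ∧
      Consistent {l : Lit A | necLit π l = 1} ∧
      ∀ M' : Set (Lit A), IsAnswerSet P M' → Consistent M' →
        M' = {l : Lit A | necLit π l = 1})
    ∨ ((∀ ω, π ω = 0) ∧ ¬ ∃ M' : Set (Lit A), IsAnswerSet P M' ∧ Consistent M') := by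
  rcases isEmpty_or_nonempty A with hA | hA
  · -- no atoms at all: every set of literals is empty
    left
    have hempty : ∀ S : Set (Lit A), S = (∅ : Set (Lit A)) := fun S =>
      Set.eq_empty_of_isEmpty S
    refine ⟨⟨Or.inr ((hempty _).trans (hempty Set.univ).symm),
        fun J _ _ => (hempty J).trans (hempty _).symm⟩,
      fun a => (IsEmpty.false a).elim,
      fun M' _ _ => (hempty M').trans (hempty _).symm⟩
  obtain ⟨a₀⟩ := hA
  have hπm : π ∈ possModels P := hπ.1
  have hLM : cl P ⊆ {l : Lit A | necLit π l = 1} := cl_subset_necOne hπm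
  by_cases hcons : Consistent (cl P)
  · by_cases hconrule : ∃ r ∈ P, r.head = none ∧ (↑r.body : Set (Lit A)) ⊆ cl P
    · -- a constraint rule fires: every possibilistic model is vacuous
      right
      obtain ⟨r, hr, hh, hb⟩ := hconrule
      have hvac : ∀ ω, π ω = 0 := by
        have hc := hπm.2 r hr
        rw [simpleConstraint, hh] at hc
        have h1 : minBody π r.body = 1 :=
          minBody_eq_one (fun l hl => hLM (hb (Finset.mem_coe.2 hl)))
        simp only [headNec, nec] at hc
        rw [h1] at hc
        intro ω
        have h2 : π ω ≤ poss π (fun _ => ¬ False) :=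
          le_poss hπm.1 (f := fun _ => ¬ False) (ω := ω) not_false
        have h3 := (hπm.1 ω).1
        linarith
      refine ⟨hvac, ?_⟩
      rintro ⟨M', ⟨hMmod, _⟩, hMcons⟩
      cases hMmod with
      | inl h =>
          have hsub : (↑r.body : Set (Lit A)) ⊆ M' := fun x hx => cl_subset_model h.2 (hb hx)
          obtain ⟨l, hl, _⟩ := h.2 r hr hsub
          rw [hh] at hl
          exact nomatch hl
      | inr h =>
          exact hMcons a₀ ⟨by rw [h]; trivial, by rw [h]; trivial⟩
    · -- the main case: cl P is the unique consistent answer set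
      left
      push_neg at hconrule
      have hML : {l : Lit A | necLit π l = 1} = cl P := by
        apply Set.Subset.antisymm _ hLM
        intro l hl
        by_contra hnl
        obtain ⟨ω₀, hω₀, hωl⟩ := exists_model_falsifying hcons hnl
        have hind := indL_mem_possModels hcons hconrule
        have hmax := max_mem_possModels hπm hind
        have heq := hπ.2 _ hmax (fun ω => le_max_left _ _)
        have h1 : indL (cl P) ω₀ = 1 := by unfold indL; rw [if_pos hω₀]
        have h0 : π ω₀ = 0 := pi_eq_zero_of_necLit_one hπm.1 hl hωl
        have h2 : max (π ω₀) (indL (cl P) ω₀) = π ω₀ := congrFun heq ω₀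
        rw [h0, h1] at h2
        norm_num at h2
      rw [hML]
      have hLmodel : IsModel P (cl P) := by
        left
        refine ⟨hcons, fun r hr hb => ?_⟩
        cases hh : r.head with
        | none => exact absurd hb (hconrule r hr hh)
        | some l => exact ⟨l, rfl, cl_closed P r hr l hh hb⟩
      have hmin : ∀ J, IsModel P J → J ⊆ cl P → J = cl P := by
        intro J hJ hJL
        cases hJ with
        | inl h => exact Set.Subset.antisymm hJL (cl_subset_model h.2)
        | inr h =>
            exact absurd ⟨hJL (by rw [h]; trivial), hJL (by rw [h]; trivial)⟩ (hcons a₀)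
      refine ⟨⟨hLmodel, hmin⟩, hcons, ?_⟩
      intro M' hM' hMcons
      cases hM'.1 with
      | inl h => exact (hM'.2 (cl P) hLmodel (cl_subset_model h.2)).symm
      | inr h =>
          exact absurd ⟨by rw [h]; trivial, by rw [h]; trivial⟩ (hMcons a₀)
  · -- cl P is inconsistent: every model containing it is inconsistent
    right
    rw [Consistent] at hcons
    push_neg at hcons
    obtain ⟨a, hat, haf⟩ := hcons
    have h1 : necLit π (a, true) = 1 := hLM hat
    have h2 : necLit π (a, false) = 1 := hLM haf
    have hvac : ∀ ω, π ω = 0 := by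
      intro ω
      by_cases hω : ω a = true
      · exact pi_eq_zero_of_necLit_one hπm.1 h2 (by simp [litSat, hω])
      · exact pi_eq_zero_of_necLit_one hπm.1 h1 (by simpa [litSat] using hω)
    refine ⟨hvac, ?_⟩
    rintro ⟨M', ⟨hMmod, _⟩, hMcons⟩
    cases hMmod with
    | inl h => exact hMcons a ⟨cl_subset_model h.2 hat, cl_subset_model h.2 haf⟩
    | inr h => exact hMcons a ⟨by rw [h]; trivial, by rw [h]; trivial⟩

end PASP
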